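/- arXiv:1802.09858 — 5 statements merged into one kernel-verified Lean document; each statement's English description precedes it below -/
import Mathlib

section
/- Kummer's test: A series of positive real numbers ∑_{n=1}^∞ a_n converges if and only if there exist a sequence {B_n} of positive real numbers and an integer N ≥ 1 such that B_n · (a_n / a_{n+1}) − B_{n+1} ≥ 1 for all n ≥ N. -/
/-- Kummer's test: a series of positive reals `∑_{n=1}^∞ a n` converges iff there exist a
sequence `B` of positive reals and an integer `N ≥ 1` such that
`B n * (a n / a (n+1)) - B (n+1) ≥ 1` for all `n ≥ N`. -/
theorem kummers_test (a : ℕ → ℝ) (hpos : ∀ n, 1 ≤ n → 0 < a n) :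
    Summable (fun n : ℕ => a (n + 1)) ↔
      ∃ B : ℕ → ℝ, (∀ n, 1 ≤ n → 0 < B n) ∧
        ∃ N : ℕ, 1 ≤ N ∧ ∀ n, N ≤ n → B n * (a n / a (n + 1)) - B (n + 1) ≥ 1 := by
  set f : ℕ → ℝ := fun n => a (n + 1) with hf
  constructor
  · intro hs
    have hsum : ∀ n : ℕ, Summable (fun k => f (k + n)) := fun n =>
      (summable_nat_add_iff n).2 hs
    set t : ℕ → ℝ := fun n => ∑' k, f (k + n) with ht
    have htpos : ∀ n, 0 < t n := by
      intro n
      refine Summable.tsum_pos (hsum n) (fun i => (hpos _ (by omega)).le) 0 (hpos _ (by omega))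
    have hkey : ∀ n, t n = f n + t (n + 1) := by
      intro n
      have := Summable.tsum_eq_zero_add (hsum n)
      simp only [zero_add] at this
      rw [ht]
      simp only []
      rw [this]
      congr 1
      apply tsum_congr
      intro k
      congr 1
      omega
    refine ⟨fun n => t n / a n, fun n hn => div_pos (htpos n) (hpos n hn), 1, le_refl 1, ?_⟩
    intro n hn
    have han : a n ≠ 0 := (hpos n hn).ne'
    have han1 : (0:ℝ) < a (n + 1) := hpos _ (by omega)
    have : t n / a n * (a n / a (n + 1)) = t n / a (n + 1) := by
      field_simp
    rw [this]
    have : t n / a (n + 1) - t (n + 1) / a (n + 1) = (t n - t (n + 1)) / a (n + 1) := by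
      ring
    rw [this, hkey n]
    have : f n + t (n + 1) - t (n + 1) = a (n + 1) := by simp [hf]
    rw [this, div_self han1.ne']
  · rintro ⟨B, hB, N, hN1, hcond⟩
    have hstep : ∀ m, N ≤ m → a (m + 1) ≤ B m * a m - B (m + 1) * a (m + 1) := by
      intro m hm
      have ha1 : (0:ℝ) < a (m + 1) := hpos _ (by omega)
      have := hcond m hm
      have h2 : B m * (a m / a (m + 1)) - B (m + 1) ≥ 1 := this
      have : (B m * a m - B (m + 1) * a (m + 1)) / a (m + 1) ≥ 1 := by
        have heq : (B m * a m - B (m + 1) * a (m + 1)) / a (m + 1)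
            = B m * (a m / a (m + 1)) - B (m + 1) := by
          field_simp
        rw [heq]; exact h2
      have := (le_div_iff₀ ha1).1 this
      linarith
    have hIco : ∀ m : ℕ, ∑ i ∈ Finset.Ico N (N + m), a (i + 1)
        ≤ B N * a N - B (N + m) * a (N + m) := by
      intro m
      induction m with
      | zero => simp
      | succ k ih =>
        rw [show N + (k + 1) = (N + k) + 1 by ring,
          Finset.sum_Ico_succ_top (by omega)]
        have := hstep (N + k) (by omega)
        linarith
    apply summable_of_sum_range_le (c := (∑ i ∈ Finset.range N, a (i + 1)) + B N * a N)
    · intro n; exact (hpos _ (by omega)).le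
    · intro n
      rcases le_or_gt n N with h | h
      · have h1 : ∑ i ∈ Finset.range n, f i ≤ ∑ i ∈ Finset.range N, f i := by
          apply Finset.sum_le_sum_of_subset_of_nonneg
          · exact Finset.range_subset_range.2 h
          · intro i _ _; exact (hpos _ (by omega)).le
        have h2 : 0 < B N * a N := mul_pos (hB N hN1) (hpos N hN1)
        calc ∑ i ∈ Finset.range n, f i ≤ ∑ i ∈ Finset.range N, f i := h1
          _ ≤ _ := by linarith
      · obtain ⟨m, rfl⟩ : ∃ m, n = N + m := ⟨n - N, by omega⟩
        rw [Finset.range_eq_Ico, ← Finset.sum_Ico_consecutive _ (Nat.zero_le N) (by omega)]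
        have h3 := hIco m
        have h4 : 0 < B (N + m) * a (N + m) :=
          mul_pos (hB _ (by omega)) (hpos _ (by omega))
        have h5 : ∑ i ∈ Finset.Ico 0 N, f i = ∑ i ∈ Finset.range N, a (i + 1) := by
          rw [← Finset.range_eq_Ico]
        rw [h5]
        have : ∑ i ∈ Finset.Ico N (N + m), f i = ∑ i ∈ Finset.Ico N (N + m), a (i + 1) := rfl
        rw [this]
        linarith
end

section
/- Sufficiency direction of Kummer's test: If {a_n} is a sequence of positive real numbers and there exist a sequence {B_n} of positive real numbers and an integer N ≥ 1 such that B_n · (a_n / a_{n+1}) − B_{n+1} ≥ 1 for all n ≥ N, then the series ∑_{n=1}^∞ a_n converges. -/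
/-- Sufficiency direction of Kummer's test. -/
theorem kummers_test_sufficiency (a : ℕ → ℝ) (hpos : ∀ n, 1 ≤ n → 0 < a n)
    (B : ℕ → ℝ) (hBpos : ∀ n, 1 ≤ n → 0 < B n) (N : ℕ) (hN : 1 ≤ N)
    (h : ∀ n, N ≤ n → B n * (a n / a (n + 1)) - B (n + 1) ≥ 1) :
    Summable (fun n : ℕ => a (n + 1)) := by
  -- key inequality
  have key : ∀ n, N ≤ n → a (n + 1) ≤ B n * a n - B (n + 1) * a (n + 1) := by
    intro n hn
    have hn1 : 1 ≤ n := le_trans hN hn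
    have ha1 : 0 < a (n + 1) := hpos (n + 1) (by omega)
    have ha : 0 < a n := hpos n hn1
    have := h n hn
    have h2 : a (n + 1) * 1 ≤ a (n + 1) * (B n * (a n / a (n + 1)) - B (n + 1)) := by
      exact mul_le_mul_of_nonneg_left this ha1.le
    calc a (n + 1) = a (n + 1) * 1 := by ring
      _ ≤ a (n + 1) * (B n * (a n / a (n + 1)) - B (n + 1)) := h2
      _ = B n * (a (n + 1) * (a n / a (n + 1))) - B (n + 1) * a (n + 1) := by ring
      _ = B n * a n - B (n + 1) * a (n + 1) := by
          rw [mul_div_cancel₀ _ ha1.ne']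
  -- shifted series is summable
  have hshift : Summable (fun n : ℕ => a (n + N + 1)) := by
    apply summable_of_sum_range_le (c := B N * a N)
      (fun n => (hpos (n + N + 1) (by omega)).le)
    intro k
    have tele : ∑ i ∈ Finset.range k, a (i + N + 1)
        ≤ ∑ i ∈ Finset.range k, (B (i + N) * a (i + N) - B (i + N + 1) * a (i + N + 1)) := by
      apply Finset.sum_le_sum
      intro i _
      exact key (i + N) (by omega)
    have tsum : ∑ i ∈ Finset.range k, (B (i + N) * a (i + N) - B (i + N + 1) * a (i + N + 1))
        = B N * a N - B (k + N) * a (k + N) := by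
      have := Finset.sum_range_sub' (fun i => B (i + N) * a (i + N)) k
      simpa [Nat.add_right_comm] using this
    have hnn : 0 ≤ B (k + N) * a (k + N) :=
      mul_nonneg (hBpos (k + N) (by omega)).le (hpos (k + N) (by omega)).le
    calc ∑ i ∈ Finset.range k, a (i + N + 1) ≤ B N * a N - B (k + N) * a (k + N) := by
          rw [← tsum]; exact tele
      _ ≤ B N * a N := by linarith
  exact (summable_nat_add_iff N).mp hshift
end

section
/- Necessity direction of Kummer's test: If {a_n} is a sequence of positive real numbers and ∑_{n=1}^∞ a_n converges with sum s, then for any real number B_1 > s / a_1, the sequence {B_n} defined recursively by B_{n+1} = B_n · (a_n / a_{n+1}) − 1 for n ≥ 1 consists of positive numbers and satisfies B_n · (a_n / a_{n+1}) − B_{n+1} ≥ 1 for all n ≥ 1. -/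
/-- Necessity direction of Kummer's test: if `∑_{n=1}^∞ a n = s` and `B 1 > s / a 1`,
then the sequence defined by the recursion `B (n+1) = B n * (a n / a (n + 1)) - 1` is
positive and satisfies Kummer's condition for all `n ≥ 1`. -/
theorem kummers_test_necessity (a : ℕ → ℝ) (hpos : ∀ n, 1 ≤ n → 0 < a n)
    (s : ℝ) (hs : HasSum (fun n : ℕ => a (n + 1)) s)
    (B : ℕ → ℝ) (hB1 : B 1 > s / a 1)
    (hrec : ∀ n, 1 ≤ n → B (n + 1) = B n * (a n / a (n + 1)) - 1) :
    (∀ n, 1 ≤ n → 0 < B n) ∧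
      ∀ n, 1 ≤ n → B n * (a n / a (n + 1)) - B (n + 1) ≥ 1 := by
  set f : ℕ → ℝ := fun n => a (n + 1) with hf
  have hsum : Summable f := hs.summable
  set R : ℕ → ℝ := fun n => ∑' k, f (n + k) with hRdef
  have hRstep : ∀ n, R n = f n + R (n + 1) := by
    intro n
    have hsn : Summable (fun k => f (n + k)) := by
      have := (summable_nat_add_iff n).2 hsum
      simpa [add_comm] using this
    calc R n = ∑' k, f (n + k) := rfl
      _ = f (n + 0) + ∑' k, f (n + (k + 1)) := Summable.tsum_eq_zero_add hsn
      _ = f n + R (n + 1) := by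
          congr 1
          apply tsum_congr; intro k; congr 1; omega
  have hRnonneg : ∀ n, 0 ≤ R n := by
    intro n
    apply tsum_nonneg
    intro k
    exact le_of_lt (hpos _ (by omega))
  have hR0 : R 0 = s := by
    simp only [hRdef]
    simpa using hs.tsum_eq
  -- invariant: for m ≥ 1, B m * a m > R m
  have key : ∀ m, 1 ≤ m → B m * a m > R m := by
    intro m hm
    induction m with
    | zero => omega
    | succ n ih =>
      rcases Nat.eq_or_lt_of_le hm with h1 | h1
      · -- base case n + 1 = 1
        have hn0 : n = 0 := by omega
        subst hn0
        have ha1 : 0 < a 1 := hpos 1 le_rfl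
        have hBs : B 1 * a 1 > s := by
          have := (div_lt_iff₀ ha1).1 hB1
          linarith
        have : s = a 1 + R 1 := by
          rw [← hR0, hRstep 0]
        linarith
      · have hn1 : 1 ≤ n := by omega
        have ihn := ih hn1
        have han1 : 0 < a (n + 1) := hpos _ (by omega)
        have han : 0 < a n := hpos _ hn1
        have hrecn := hrec n hn1
        have hBval : B (n + 1) * a (n + 1) = B n * a n - a (n + 1) := by
          rw [hrecn]; field_simp
        have hRn : R n = a (n + 1) + R (n + 1) := by
          rw [hRstep n]
        linarith
  constructor
  · intro n hn
    have h := key n hn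
    have han : 0 < a n := hpos n hn
    have hRn : 0 ≤ R n := hRnonneg n
    nlinarith
  · intro n hn
    rw [hrec n hn]
    linarith
end

section
/- Equivalence of the inequality and equality forms of Kummer's condition: For a sequence {a_n} of positive real numbers and an integer N ≥ 1, there exists a sequence of positive real numbers {B_n}_{n≥N} satisfying B_n · (a_n / a_{n+1}) − B_{n+1} ≥ 1 for all n ≥ N if and only if there exists a sequence of positive real numbers {C_n}_{n≥N} satisfying the equality C_{n+1} = C_n · (a_n / a_{n+1}) − 1 for all n ≥ N. -/
/-- Equivalence of the inequality and equality forms of Kummer's condition. -/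
theorem kummer_condition_ineq_iff_eq (a : ℕ → ℝ) (hpos : ∀ n, 1 ≤ n → 0 < a n)
    (N : ℕ) (hN : 1 ≤ N) :
    (∃ B : ℕ → ℝ, (∀ n, N ≤ n → 0 < B n) ∧
        ∀ n, N ≤ n → B n * (a n / a (n + 1)) - B (n + 1) ≥ 1) ↔
      (∃ C : ℕ → ℝ, (∀ n, N ≤ n → 0 < C n) ∧
        ∀ n, N ≤ n → C (n + 1) = C n * (a n / a (n + 1)) - 1) := by
  constructor
  · rintro ⟨B, hBpos, hB⟩
    set f : ℕ → ℝ := fun k => Nat.rec (B N) (fun k fk => fk * (a (N + k) / a (N + k + 1)) - 1) k with hf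
    have hf0 : f 0 = B N := rfl
    have hfs : ∀ k, f (k + 1) = f k * (a (N + k) / a (N + k + 1)) - 1 := fun k => rfl
    have hge : ∀ k, B (N + k) ≤ f k := by
      intro k
      induction k with
      | zero => simp [hf0]
      | succ k ih =>
        have hr : 0 < a (N + k) / a (N + k + 1) :=
          div_pos (hpos _ (le_trans hN (Nat.le_add_right _ _)))
            (hpos _ (le_trans hN (by omega)))
        have h1 := hB (N + k) (Nat.le_add_right _ _)
        rw [hfs]
        have : B (N + k) * (a (N + k) / a (N + k + 1)) ≤ f k * (a (N + k) / a (N + k + 1)) :=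
          mul_le_mul_of_nonneg_right ih (le_of_lt hr)
        show B (N + k + 1) ≤ f k * (a (N + k) / a (N + k + 1)) - 1
        linarith
    refine ⟨fun n => f (n - N), fun n hn => ?_, fun n hn => ?_⟩
    · show 0 < f (n - N)
      have := hge (n - N)
      rw [Nat.add_sub_cancel' hn] at this
      exact lt_of_lt_of_le (hBpos _ hn) this
    · show f (n + 1 - N) = f (n - N) * (a n / a (n + 1)) - 1
      have h1 : n + 1 - N = (n - N) + 1 := by omega
      rw [h1, hfs, Nat.add_sub_cancel' hn]
  · rintro ⟨C, hCpos, hC⟩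
    exact ⟨C, hCpos, fun n hn => by rw [hC n hn]; linarith⟩
end

section
/- Ratio form of Kummer's test: A series of positive real numbers ∑_{n=1}^∞ a_n converges if and only if there exist a sequence {B_n} of positive real numbers, a real number ρ > 0, and an integer N ≥ 1 such that a_{n+1} / a_n ≤ B_n / (ρ + B_{n+1}) for all n ≥ N. -/
/-- Ratio form of Kummer's test: `∑_{n=1}^∞ a n` converges iff there exist a positive
sequence `B`, a real `ρ > 0` and an integer `N ≥ 1` such that
`a (n+1) / a n ≤ B n / (ρ + B (n+1))` for all `n ≥ N`. -/
theorem kummers_test_ratio_form (a : ℕ → ℝ) (hpos : ∀ n, 1 ≤ n → 0 < a n) :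
    Summable (fun n : ℕ => a (n + 1)) ↔
      ∃ B : ℕ → ℝ, (∀ n, 1 ≤ n → 0 < B n) ∧
        ∃ ρ : ℝ, 0 < ρ ∧ ∃ N : ℕ, 1 ≤ N ∧
          ∀ n, N ≤ n → a (n + 1) / a n ≤ B n / (ρ + B (n + 1)) := by
  constructor
  · intro h
    set T : ℕ → ℝ := fun n => ∑' k, a (k + n + 1) with hTdef
    have hsum : ∀ n, Summable (fun k => a (k + n + 1)) := by
      intro n
      have := (summable_nat_add_iff n).2 h
      simpa [add_assoc] using this
    have hTpos : ∀ n, 0 < T n := by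
      intro n
      exact Summable.tsum_pos (hsum n) (fun i => (hpos _ (by omega)).le) 0 (hpos _ (by omega))
    have hTrec : ∀ n, T n = a (n + 1) + T (n + 1) := by
      intro n
      have h0 := Summable.tsum_eq_zero_add (hsum n)
      simp only [hTdef]
      rw [h0]
      congr 1
      · simp
      · apply tsum_congr
        intro k
        congr 1
        omega
    refine ⟨fun n => T n / a n, ?_, 1, one_pos, 1, le_refl 1, ?_⟩
    · intro n hn
      exact div_pos (hTpos n) (hpos n hn)
    · intro n hn
      have han : 0 < a n := hpos n hn
      have han1 : 0 < a (n + 1) := hpos _ (by omega)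
      have hT1 := hTpos (n + 1)
      have hden : 0 < 1 + T (n + 1) / a (n + 1) := by
        have := div_pos hT1 han1
        linarith
      rw [div_le_div_iff₀ han hden]
      have hrec := hTrec n
      have : a (n + 1) * (1 + T (n + 1) / a (n + 1)) = T n / a n * a n := by
        field_simp
        linarith
      rw [this]
  · rintro ⟨B, hB, ρ, hρ, N, hN, hineq⟩
    have key : ∀ n, N ≤ n → ρ * a (n + 1) ≤ a n * B n - a (n + 1) * B (n + 1) := by
      intro n hn
      have han : 0 < a n := hpos n (le_trans hN hn)
      have hBn1 : 0 < B (n + 1) := hB _ (by omega)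
      have hden : 0 < ρ + B (n + 1) := by linarith
      have := (div_le_div_iff₀ han hden).1 (hineq n hn)
      nlinarith
    have tel : ∀ n, N ≤ n →
        ρ * ∑ i ∈ Finset.Ico N n, a (i + 1) ≤ a N * B N - a n * B n := by
      intro n hn
      induction n, hn using Nat.le_induction with
      | base => simp
      | succ m hm ih =>
        rw [Finset.sum_Ico_succ_top hm, mul_add]
        have := key m hm
        linarith
    have hC : ∀ n, ∑ i ∈ Finset.range n, a (i + 1) ≤
        (∑ i ∈ Finset.range N, a (i + 1)) + a N * B N / ρ := by
      intro n
      have hBNpos : 0 < a N * B N := mul_pos (hpos N hN) (hB N hN)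
      rcases le_or_gt n N with hle | hlt
      · have h1 : ∑ i ∈ Finset.range n, a (i + 1) ≤ ∑ i ∈ Finset.range N, a (i + 1) := by
          apply Finset.sum_le_sum_of_subset_of_nonneg
          · exact Finset.range_subset_range.2 hle
          · intro i _ _; exact (hpos _ (by omega)).le
        have : 0 ≤ a N * B N / ρ := by positivity
        linarith
      · have hn : N ≤ n := hlt.le
        have hsplit : ∑ i ∈ Finset.range n, a (i + 1) =
            (∑ i ∈ Finset.range N, a (i + 1)) + ∑ i ∈ Finset.Ico N n, a (i + 1) := by
          rw [Finset.range_eq_Ico,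
            ← Finset.sum_Ico_consecutive _ (Nat.zero_le N) hn, Finset.range_eq_Ico]
        have htel := tel n hn
        have hanBn : 0 ≤ a n * B n :=
          (mul_pos (hpos n (le_trans hN hn)) (hB n (le_trans hN hn))).le
        have h2 : ρ * ∑ i ∈ Finset.Ico N n, a (i + 1) ≤ a N * B N := by linarith
        have h3 : ∑ i ∈ Finset.Ico N n, a (i + 1) ≤ a N * B N / ρ := by
          rw [le_div_iff₀ hρ] at *
          linarith
        linarith [hsplit.le, hsplit.ge]
    exact summable_of_sum_range_le (fun n => (hpos _ (by omega)).le) hC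
end
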